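/- In the single-resource prophet model with correlated arrivals, the process (Z_t)_{t=0,…,T} defined by Z_t = h_t + Σ_{t'=1}^{t} Σ_{i=1}^I p_{it'} (r_{it'} − h_{t'})^+ is a submartingale with respect to the filtration (ℱ_t)_{t=0,…,T}. -/

import Mathlib

open MeasureTheory ProbabilityTheory

/-- **The process `Z` is a submartingale.** In the single-resource prophet model with
correlated arrivals, the process `Z_t = h_t + Σ_{t'=1}^{t} Σ_{i=1}^I p_{it'} (r_{it'} - h_{t'})⁺`,
`t = 0, …, T`, is a submartingale with respect to the filtration `(ℱ_t)_{t=0,…,T}`: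
it is adapted, integrable, and `Z_s ≤ E[Z_t | ℱ_s]` a.s. for all `0 ≤ s ≤ t ≤ T`. -/
theorem Z_is_submartingale
    {Ω : Type*} [MeasurableSpace Ω] (μ : Measure Ω) [IsProbabilityMeasure μ]
    (T I : ℕ) (hT : 1 ≤ T) (hI : 1 ≤ I)
    (r : Fin I → ℕ → ℝ) (hr : ∀ i t, 0 ≤ r i t)
    (ℱ : Filtration ℕ (inferInstance : MeasurableSpace Ω))
    (p : Fin I → ℕ → Ω → ℝ)
    (hp_meas : ∀ i, ∀ t ∈ Finset.Icc 1 T, Measurable[ℱ t] (p i t))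
    (hp01 : ∀ i t ω, 0 ≤ p i t ω ∧ p i t ω ≤ 1)
    (hp_sum : ∀ᵐ ω ∂μ, ∀ t ∈ Finset.Icc 1 T, ∑ i, p i t ω ≤ 1)
    (Tbar : ℝ) (hTbar : 0 < Tbar)
    (hp_Tbar : ∀ᵐ ω ∂μ, ∑ t ∈ Finset.Icc 1 T, ∑ i, p i t ω ≤ Tbar)
    -- the threshold process:
    (h : ℕ → Ω → ℝ)
    (hh : ∀ t ≤ T, ∀ ω, h t ω =
      (μ[(fun ω' => ∑ t' ∈ Finset.Icc (t + 1) T, ∑ i, r i t' * p i t' ω') | ℱ t]) ω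
        / (1 + Tbar - ∑ t' ∈ Finset.Icc 1 t, ∑ i, p i t' ω))
    -- the process `Z`:
    (Z : ℕ → Ω → ℝ)
    (hZ : ∀ t ≤ T, ∀ ω, Z t ω =
      h t ω + ∑ t' ∈ Finset.Icc 1 t, ∑ i, p i t' ω * max (r i t' - h t' ω) 0) :
    (∀ t ≤ T, StronglyMeasurable[ℱ t] (Z t)) ∧
    (∀ t ≤ T, Integrable (Z t) μ) ∧
    (∀ s t, s ≤ t → t ≤ T → Z s ≤ᵐ[μ] μ[Z t | ℱ s]) := by
  classical
  have hle : ∀ t, ℱ t ≤ (inferInstance : MeasurableSpace Ω) := ℱ.le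
  -- abbreviations
  set N : ℕ → Ω → ℝ := fun t ω => ∑ t' ∈ Finset.Icc (t + 1) T, ∑ i, r i t' * p i t' ω
    with hNdef
  set D : ℕ → Ω → ℝ := fun t ω => 1 + Tbar - ∑ t' ∈ Finset.Icc 1 t, ∑ i, p i t' ω
    with hDdef
  set C : ℝ := ∑ t' ∈ Finset.Icc 1 T, ∑ i, r i t' with hCdef
  have hh' : ∀ t ≤ T, ∀ ω, h t ω = (μ[N t | ℱ t]) ω / D t ω := by
    intro t ht ω; exact hh t ht ω
  -- measurability of p with respect to later σ-algebras
  have hp_meas' : ∀ (i : Fin I) (t' t : ℕ), 1 ≤ t' → t' ≤ t → t' ≤ T →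
      Measurable[ℱ t] (p i t') := by
    intro i t' t h1 h2 h3
    exact (hp_meas i t' (Finset.mem_Icc.2 ⟨h1, h3⟩)).mono (ℱ.mono h2) le_rfl
  -- measurability of D
  have hD_meas : ∀ t ≤ T, Measurable[ℱ t] (D t) := by
    intro t ht
    apply Measurable.const_sub
    apply Finset.measurable_sum
    intro t' ht'
    apply Finset.measurable_sum
    intro i _
    exact hp_meas' i t' t (Finset.mem_Icc.1 ht').1 (Finset.mem_Icc.1 ht').2 (le_trans (Finset.mem_Icc.1 ht').2 ht)
  -- measurability of N (w.r.t. the ambient σ-algebra)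
  have hN_meas : ∀ t, Measurable (N t) := by
    intro t
    apply Finset.measurable_sum
    intro t' ht'
    apply Finset.measurable_sum
    intro i _
    have := hp_meas' i t' t' (by have := (Finset.mem_Icc.1 ht').1; omega) le_rfl (Finset.mem_Icc.1 ht').2
    exact measurable_const.mul (this.mono (hle t') le_rfl)
  -- pointwise bounds on N
  have hN_nonneg : ∀ t ω, 0 ≤ N t ω := by
    intro t ω
    apply Finset.sum_nonneg; intro t' _; apply Finset.sum_nonneg; intro i _
    exact mul_nonneg (hr i t') (hp01 i t' ω).1
  have hN_le : ∀ t ω, N t ω ≤ C := by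
    intro t ω
    calc N t ω ≤ ∑ t' ∈ Finset.Icc (t + 1) T, ∑ i, r i t' := by
          apply Finset.sum_le_sum; intro t' _; apply Finset.sum_le_sum; intro i _
          exact mul_le_of_le_one_right (hr i t') (hp01 i t' ω).2
      _ ≤ C := by
          apply Finset.sum_le_sum_of_subset_of_nonneg
          · exact Finset.Icc_subset_Icc (by omega) le_rfl
          · intro t' _ _; exact Finset.sum_nonneg fun i _ => hr i t'
  have hN_int : ∀ t, Integrable (N t) μ := by
    intro t
    refine (integrable_const C).mono' ((hN_meas t).stronglyMeasurable).aestronglyMeasurable ?_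
    refine ae_of_all μ fun ω => ?_
    rw [Real.norm_eq_abs, abs_le]
    exact ⟨by linarith [hN_nonneg t ω, hN_le t ω], hN_le t ω⟩
  -- a.e. bounds on conditional expectations of N
  have hR_bdd : ∀ t, ∀ᵐ ω ∂μ, 0 ≤ (μ[N t | ℱ t]) ω ∧ (μ[N t | ℱ t]) ω ≤ C := by
    intro t
    have h1 : 0 ≤ᵐ[μ] μ[N t | ℱ t] := condExp_nonneg (ae_of_all μ (hN_nonneg t))
    have h2 : μ[N t | ℱ t] ≤ᵐ[μ] μ[(fun _ => C) | ℱ t] :=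
      condExp_mono (hN_int t) (integrable_const C) (ae_of_all μ (hN_le t))
    rw [condExp_const (hle t)] at h2
    filter_upwards [h1, h2] with ω e1 e2 using ⟨e1, e2⟩
  -- a.e. D is at least 1, pointwise D is at most 1 + Tbar
  have hD_le : ∀ t ω, D t ω ≤ 1 + Tbar := by
    intro t ω
    have : (0:ℝ) ≤ ∑ t' ∈ Finset.Icc 1 t, ∑ i, p i t' ω :=
      Finset.sum_nonneg fun t' _ => Finset.sum_nonneg fun i _ => (hp01 i t' ω).1
    simp only [hDdef]; linarith
  have hD_ae : ∀ᵐ ω ∂μ, ∀ t ≤ T, 1 ≤ D t ω := by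
    filter_upwards [hp_Tbar] with ω hω
    intro t ht
    have hmono : ∑ t' ∈ Finset.Icc 1 t, ∑ i, p i t' ω ≤ ∑ t' ∈ Finset.Icc 1 T, ∑ i, p i t' ω := by
      apply Finset.sum_le_sum_of_subset_of_nonneg (Finset.Icc_subset_Icc le_rfl ht)
      intro t' _ _; exact Finset.sum_nonneg fun i _ => (hp01 i t' ω).1
    simp only [hDdef]; linarith
  -- a.e. facts about h
  have hh_ae : ∀ᵐ ω ∂μ, ∀ t ≤ T,
      0 ≤ h t ω ∧ h t ω ≤ C ∧ h t ω * D t ω = (μ[N t | ℱ t]) ω := by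
    rw [ae_all_iff]
    intro t
    rcases le_or_gt t T with ht | ht
    · filter_upwards [hD_ae, hR_bdd t] with ω h1 h2
      intro _
      have hD1 : 1 ≤ D t ω := h1 t ht
      have hDpos : 0 < D t ω := by linarith
      refine ⟨?_, ?_, ?_⟩
      · rw [hh' t ht ω]; exact div_nonneg h2.1 (le_of_lt hDpos)
      · rw [hh' t ht ω]
        calc (μ[N t | ℱ t]) ω / D t ω ≤ (μ[N t | ℱ t]) ω := div_le_self h2.1 hD1
          _ ≤ C := h2.2
      · rw [hh' t ht ω]; field_simp
    · exact ae_of_all μ fun ω hle' => absurd hle' (by omega)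
  -- strong measurability of h
  have hh_meas : ∀ t ≤ T, StronglyMeasurable[ℱ t] (h t) := by
    intro t ht
    have : h t = fun ω => (μ[N t | ℱ t]) ω / D t ω := funext (hh' t ht)
    rw [this]
    exact (stronglyMeasurable_condExp.measurable.div (hD_meas t ht)).stronglyMeasurable
  -- integrability of h
  have hh_int : ∀ t ≤ T, Integrable (h t) μ := by
    intro t ht
    refine (integrable_const C).mono'
      (((hh_meas t ht).mono (hle t)).aestronglyMeasurable) ?_
    filter_upwards [hh_ae] with ω hω
    obtain ⟨h0, hC, -⟩ := hω t ht
    rw [Real.norm_eq_abs, abs_le]; exact ⟨by linarith, hC⟩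
  -- strong measurability of Z
  have hZ_meas : ∀ t ≤ T, StronglyMeasurable[ℱ t] (Z t) := by
    intro t ht
    have : Z t = fun ω => h t ω + ∑ t' ∈ Finset.Icc 1 t, ∑ i,
        p i t' ω * max (r i t' - h t' ω) 0 := funext (hZ t ht)
    rw [this]
    refine (hh_meas t ht).add ?_
    refine Finset.stronglyMeasurable_fun_sum _ fun t' ht' => ?_
    refine Finset.stronglyMeasurable_fun_sum _ fun i _ => ?_
    have h1 := Finset.mem_Icc.1 ht'
    have hpm : Measurable[ℱ t] (p i t') := hp_meas' i t' t h1.1 h1.2 (le_trans h1.2 ht)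
    have hhm : Measurable[ℱ t] (h t') :=
      (((hh_meas t' (le_trans h1.2 ht)).mono (ℱ.mono h1.2)).measurable)
    exact (hpm.mul ((measurable_const.sub hhm).max measurable_const)).stronglyMeasurable
  -- integrability of the summands of Z
  have hterm_int : ∀ t' , 1 ≤ t' → t' ≤ T → ∀ i : Fin I,
      Integrable (fun ω => p i t' ω * max (r i t' - h t' ω) 0) μ := by
    intro t' h1 h2 i
    have hm : StronglyMeasurable (fun ω => p i t' ω * max (r i t' - h t' ω) 0) := by
      have hpm : Measurable (p i t') := (hp_meas' i t' t' h1 le_rfl h2).mono (hle t') le_rfl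
      have hhm : Measurable (h t') := ((hh_meas t' h2).mono (hle t')).measurable
      exact (hpm.mul ((measurable_const.sub hhm).max measurable_const)).stronglyMeasurable
    refine (integrable_const (r i t')).mono' hm.aestronglyMeasurable ?_
    filter_upwards [hh_ae] with ω hω
    obtain ⟨h0, -, -⟩ := hω t' h2
    have hp0 := (hp01 i t' ω).1
    have hp1 := (hp01 i t' ω).2
    have hmax0 : 0 ≤ max (r i t' - h t' ω) 0 := le_max_right _ _
    have hmaxle : max (r i t' - h t' ω) 0 ≤ r i t' := by
      apply max_le (by linarith [hr i t']) (hr i t')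
    rw [Real.norm_eq_abs, abs_le]
    constructor
    · nlinarith
    · nlinarith
  -- integrability of Z
  have hZ_int : ∀ t ≤ T, Integrable (Z t) μ := by
    intro t ht
    have : Z t = fun ω => h t ω + ∑ t' ∈ Finset.Icc 1 t, ∑ i,
        p i t' ω * max (r i t' - h t' ω) 0 := funext (hZ t ht)
    rw [this]
    refine (hh_int t ht).add ?_
    refine integrable_finset_sum _ fun t' ht' => ?_
    refine integrable_finset_sum _ fun i _ => ?_
    have h1 := Finset.mem_Icc.1 ht'
    exact hterm_int t' h1.1 (le_trans h1.2 ht) i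
  -- the key one-step inequality
  have key : ∀ t, t + 1 ≤ T → Z t ≤ᵐ[μ] μ[Z (t + 1) | ℱ t] := by
    intro t ht1
    have htT : t ≤ T := by omega
    set W : Ω → ℝ := fun ω => h (t + 1) ω + ∑ i, p i (t + 1) ω * max (r i (t + 1) - h (t + 1) ω) 0
      with hWdef
    set g : Ω → ℝ := fun ω => ∑ i, r i (t + 1) * p i (t + 1) ω with hgdef
    set Cg : ℝ := ∑ i, r i (t + 1) with hCgdef
    have hins1 : Finset.Icc 1 (t + 1) = insert (t + 1) (Finset.Icc 1 t) := by
      ext x; simp only [Finset.mem_Icc, Finset.mem_insert]; omega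
    have hnotmem1 : t + 1 ∉ Finset.Icc 1 t := by simp only [Finset.mem_Icc]; omega
    -- decomposition of Z (t+1)
    have hsplit : Z (t + 1) = (fun ω => Z t ω - h t ω) + W := by
      funext ω
      simp only [Pi.add_apply]
      rw [hZ (t + 1) ht1 ω, hZ t htT ω, hins1, Finset.sum_insert hnotmem1]
      simp only [hWdef]; ring
    -- decomposition of N t
    have hNsplit : g + N (t + 1) = N t := by
      funext ω
      have hins2 : Finset.Icc (t + 1) T = insert (t + 1) (Finset.Icc (t + 2) T) := by
        ext x; simp only [Finset.mem_Icc, Finset.mem_insert]; omega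
      have hnm2 : t + 1 ∉ Finset.Icc (t + 2) T := by simp only [Finset.mem_Icc]; omega
      simp only [Pi.add_apply, hNdef, hgdef]
      rw [hins2, Finset.sum_insert hnm2]
    -- measurability and integrability of g
    have hg_meas : Measurable g := by
      apply Finset.measurable_sum
      intro i _
      exact measurable_const.mul ((hp_meas' i (t + 1) (t + 1) (by omega) le_rfl ht1).mono
        (hle (t + 1)) le_rfl)
    have hg_bdd : ∀ ω, 0 ≤ g ω ∧ g ω ≤ Cg := by
      intro ω
      constructor
      · exact Finset.sum_nonneg fun i _ => mul_nonneg (hr i (t + 1)) (hp01 i (t + 1) ω).1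
      · exact Finset.sum_le_sum fun i _ => mul_le_of_le_one_right (hr i (t + 1))
          (hp01 i (t + 1) ω).2
    have hg_int : Integrable g μ := by
      refine (integrable_const Cg).mono' hg_meas.stronglyMeasurable.aestronglyMeasurable ?_
      refine ae_of_all μ fun ω => ?_
      rw [Real.norm_eq_abs, abs_le]
      exact ⟨by linarith [(hg_bdd ω).1, (hg_bdd ω).2], (hg_bdd ω).2⟩
    -- measurability and integrability of W
    have hW_meas : Measurable W := by
      apply Measurable.add
      · exact ((hh_meas (t + 1) ht1).mono (hle (t + 1))).measurable
      · apply Finset.measurable_sum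
        intro i _
        refine Measurable.mul ((hp_meas' i (t + 1) (t + 1) (by omega) le_rfl ht1).mono
          (hle (t + 1)) le_rfl) ?_
        exact (measurable_const.sub ((hh_meas (t + 1) ht1).mono (hle (t + 1))).measurable).max
          measurable_const
    have hW_bdd : ∀ᵐ ω ∂μ, 0 ≤ W ω ∧ W ω ≤ C + Cg := by
      filter_upwards [hh_ae] with ω hω
      obtain ⟨h0, hC, -⟩ := hω (t + 1) ht1
      have hsum0 : 0 ≤ ∑ i, p i (t + 1) ω * max (r i (t + 1) - h (t + 1) ω) 0 :=
        Finset.sum_nonneg fun i _ => mul_nonneg (hp01 i (t + 1) ω).1 (le_max_right _ _)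
      have hsumle : ∑ i, p i (t + 1) ω * max (r i (t + 1) - h (t + 1) ω) 0 ≤ Cg := by
        refine Finset.sum_le_sum fun i _ => ?_
        have hmax : max (r i (t + 1) - h (t + 1) ω) 0 ≤ r i (t + 1) :=
          max_le (by linarith) (hr i (t + 1))
        calc p i (t + 1) ω * max (r i (t + 1) - h (t + 1) ω) 0
            ≤ 1 * max (r i (t + 1) - h (t + 1) ω) 0 :=
              mul_le_mul_of_nonneg_right (hp01 i (t + 1) ω).2 (le_max_right _ _)
          _ = max (r i (t + 1) - h (t + 1) ω) 0 := one_mul _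
          _ ≤ r i (t + 1) := hmax
      constructor
      · simp only [hWdef]; linarith
      · simp only [hWdef]; linarith
    have hW_int : Integrable W μ := by
      refine (integrable_const (C + Cg)).mono' hW_meas.stronglyMeasurable.aestronglyMeasurable ?_
      filter_upwards [hW_bdd] with ω hω
      rw [Real.norm_eq_abs, abs_le]
      exact ⟨by linarith [hω.1, hω.2], hω.2⟩
    -- integrability of D t * W
    have hDW_int : Integrable (D t * W) μ := by
      have hm : Measurable (D t * W) :=
        (((hD_meas t htT).mono (hle t) le_rfl)).mul hW_meas
      refine (integrable_const ((1 + Tbar) * (C + Cg))).mono'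
        hm.stronglyMeasurable.aestronglyMeasurable ?_
      filter_upwards [hW_bdd, hD_ae] with ω hω hωD
      have hD1 : 1 ≤ D t ω := hωD t htT
      have hDle : D t ω ≤ 1 + Tbar := hD_le t ω
      rw [Pi.mul_apply, Real.norm_eq_abs, abs_le]
      constructor
      · nlinarith [hω.1, hω.2]
      · nlinarith [hω.1, hω.2]
    -- the key pointwise inequality
    have key_ae : g + μ[N (t + 1) | ℱ (t + 1)] ≤ᵐ[μ] D t * W := by
      filter_upwards [hh_ae, hD_ae] with ω hωh hωD
      obtain ⟨hh0, hhC, hhD⟩ := hωh (t + 1) ht1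
      have hD1 : 1 ≤ D t ω := hωD t htT
      simp only [Pi.add_apply, Pi.mul_apply]
      set h' : ℝ := h (t + 1) ω with hh'def
      set s1 : ℝ := ∑ i, p i (t + 1) ω with hs1def
      set s2 : ℝ := ∑ i, p i (t + 1) ω * max (r i (t + 1) - h') 0 with hs2def
      have hDrel : D t ω = D (t + 1) ω + s1 := by
        simp only [hDdef, hs1def]
        rw [hins1, Finset.sum_insert hnotmem1]
        ring
      have hg_le : g ω ≤ s1 * h' + D t ω * s2 := by
        have hper : ∀ i : Fin I, r i (t + 1) * p i (t + 1) ω ≤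
            p i (t + 1) ω * h' + D t ω * (p i (t + 1) ω * max (r i (t + 1) - h') 0) := by
          intro i
          obtain ⟨hp0, hp1l⟩ := hp01 i (t + 1) ω
          rcases le_or_gt (r i (t + 1)) h' with hc | hc
          · rw [max_eq_right (by linarith)]
            nlinarith
          · rw [max_eq_left (by linarith)]
            nlinarith [mul_nonneg hp0 (mul_nonneg
              (by linarith : (0:ℝ) ≤ D t ω - 1) (by linarith : (0:ℝ) ≤ r i (t + 1) - h'))]
        calc g ω ≤ ∑ i, (p i (t + 1) ω * h'
              + D t ω * (p i (t + 1) ω * max (r i (t + 1) - h') 0)) :=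
              Finset.sum_le_sum fun i _ => hper i
          _ = s1 * h' + D t ω * s2 := by
              rw [Finset.sum_add_distrib, ← Finset.sum_mul, ← Finset.mul_sum]
      have hWω : W ω = h' + s2 := rfl
      have expand : D t ω * W ω = (μ[N (t + 1) | ℱ (t + 1)]) ω + (s1 * h' + D t ω * s2) := by
        rw [hWω, ← hhD]
        linear_combination (h' : ℝ) * hDrel
      linarith [hg_le, expand]
    -- take conditional expectations
    have hlhs_int : Integrable (g + μ[N (t + 1) | ℱ (t + 1)]) μ := hg_int.add integrable_condExp
    have mono1 : μ[g + μ[N (t + 1) | ℱ (t + 1)] | ℱ t] ≤ᵐ[μ] μ[D t * W | ℱ t] :=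
      condExp_mono hlhs_int hDW_int key_ae
    have lhs_eq : μ[g + μ[N (t + 1) | ℱ (t + 1)] | ℱ t] =ᵐ[μ] μ[N t | ℱ t] := by
      have e1 : μ[g + μ[N (t + 1) | ℱ (t + 1)] | ℱ t]
          =ᵐ[μ] μ[g | ℱ t] + μ[μ[N (t + 1) | ℱ (t + 1)] | ℱ t] :=
        condExp_add hg_int integrable_condExp (ℱ t)
      have e2 : μ[μ[N (t + 1) | ℱ (t + 1)] | ℱ t] =ᵐ[μ] μ[N (t + 1) | ℱ t] :=
        condExp_condExp_of_le (ℱ.mono (Nat.le_succ t)) (hle (t + 1))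
      have e3 : μ[g | ℱ t] + μ[N (t + 1) | ℱ t] =ᵐ[μ] μ[g + N (t + 1) | ℱ t] :=
        (condExp_add hg_int (hN_int (t + 1)) (ℱ t)).symm
      calc μ[g + μ[N (t + 1) | ℱ (t + 1)] | ℱ t]
          =ᵐ[μ] μ[g | ℱ t] + μ[μ[N (t + 1) | ℱ (t + 1)] | ℱ t] := e1
        _ =ᵐ[μ] μ[g | ℱ t] + μ[N (t + 1) | ℱ t] := by
            filter_upwards [e2] with ω hω
            simp only [Pi.add_apply, hω]
        _ =ᵐ[μ] μ[g + N (t + 1) | ℱ t] := e3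
        _ = μ[N t | ℱ t] := by rw [hNsplit]
    have rhs_eq : μ[D t * W | ℱ t] =ᵐ[μ] D t * μ[W | ℱ t] :=
      condExp_mul_of_stronglyMeasurable_left (hD_meas t htT).stronglyMeasurable hDW_int hW_int
    -- conclude h t ≤ᵐ μ[W | ℱ t]
    have final : h t ≤ᵐ[μ] μ[W | ℱ t] := by
      filter_upwards [mono1, lhs_eq, rhs_eq, hh_ae, hD_ae] with ω e1 e2 e3 e4 e5
      obtain ⟨-, -, hhD⟩ := e4 t htT
      have hD1 : 1 ≤ D t ω := e5 t htT
      have hDpos : 0 < D t ω := by linarith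
      have hmul : h t ω * D t ω ≤ (μ[W | ℱ t]) ω * D t ω := by
        rw [hhD, ← e2]
        calc (μ[g + μ[N (t + 1) | ℱ (t + 1)] | ℱ t]) ω ≤ (μ[D t * W | ℱ t]) ω := e1
          _ = D t ω * (μ[W | ℱ t]) ω := by rw [e3]; rfl
          _ = (μ[W | ℱ t]) ω * D t ω := mul_comm _ _
      exact le_of_mul_le_mul_right hmul hDpos
    -- assemble the one-step inequality
    have step1 : μ[Z (t + 1) | ℱ t] =ᵐ[μ] fun ω => (Z t ω - h t ω) + (μ[W | ℱ t]) ω := by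
      rw [hsplit]
      have e1 : μ[(fun ω => Z t ω - h t ω) + W | ℱ t]
          =ᵐ[μ] μ[(fun ω => Z t ω - h t ω) | ℱ t] + μ[W | ℱ t] :=
        condExp_add ((hZ_int t htT).sub (hh_int t htT)) hW_int (ℱ t)
      have e2 : μ[(fun ω => Z t ω - h t ω) | ℱ t] = fun ω => Z t ω - h t ω :=
        condExp_of_stronglyMeasurable (hle t) ((hZ_meas t htT).sub (hh_meas t htT))
          ((hZ_int t htT).sub (hh_int t htT))
      filter_upwards [e1] with ω hω
      rw [hω]
      simp only [Pi.add_apply, e2]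
    filter_upwards [step1, final] with ω e1 e2
    rw [e1]
    linarith
  refine ⟨hZ_meas, hZ_int, ?_⟩
  intro s t hst htT
  induction t, hst using Nat.le_induction with
  | base =>
      have : μ[Z s | ℱ s] = Z s :=
        condExp_of_stronglyMeasurable (hle s) (hZ_meas s htT) (hZ_int s htT)
      rw [this]
  | succ t hst ih =>
      have htT' : t ≤ T := by omega
      have ih' := ih htT'
      have h1 : μ[Z t | ℱ s] ≤ᵐ[μ] μ[μ[Z (t + 1) | ℱ t] | ℱ s] :=
        condExp_mono (hZ_int t htT') integrable_condExp (key t htT)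
      have h2 : μ[μ[Z (t + 1) | ℱ t] | ℱ s] =ᵐ[μ] μ[Z (t + 1) | ℱ s] :=
        condExp_condExp_of_le (ℱ.mono hst) (hle t)
      filter_upwards [ih', h1, h2] with ω e1 e2 e3
      rw [← e3]; exact le_trans e1 e2
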